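/- For the weight Δ₊(x) on (iℝ)ⁿ with n=1, the function c₀(x)Δ(x) = c₀(x)c₊(x)Δ₊(x) is invariant under x₁ ↦ 1 - x₁ (the affine reflection s₀), where Δ(x) = c₊(x)Δ₊(x); more generally for each i ∈ [0,n] the function c_i(x)Δ(x) is invariant under s_i. -/

import Mathlib

noncomputable section

/-- Γ(u+v)Γ(u−v). -/
def Gpm (u v : ℂ) : ℂ := Complex.Gamma (u + v) * Complex.Gamma (u - v)

/-- The weight Δ₊(x) = ∏_{j<k} Γ(t±x_j±x_k)/Γ(±x_j±x_k) ∏_j Γ(a±x_j)Γ(b±x_j)Γ(c±x_j)Γ(d±x_j)/Γ(±2x_j). -/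
def Dplus (n : ℕ) (a b c d t : ℂ) (x : Fin n → ℂ) : ℂ :=
  (∏ j, ∏ k ∈ Finset.Ioi j,
      (Gpm (t + x j) (x k) * Gpm (t - x j) (x k))
        / (Gpm (x j) (x k) * Gpm (-(x j)) (x k))) *
    ∏ j, (Gpm a (x j) * Gpm b (x j) * Gpm c (x j) * Gpm d (x j))
          / (Complex.Gamma (2 * x j) * Complex.Gamma (-(2 * x j)))

/-- c₊(x) = ∏_{j<k} ((t−x_j+x_k)(t−x_j−x_k))/((x_k+x_j)(x_k−x_j)) ∏_j ((a−x_j)(b−x_j))/(−2x_j). -/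
def cplus (n : ℕ) (a b t : ℂ) (x : Fin n → ℂ) : ℂ :=
  (∏ j, ∏ k ∈ Finset.Ioi j,
      ((t - x j + x k) * (t - x j - x k)) / ((x k + x j) * (x k - x j))) *
    ∏ j, ((a - x j) * (b - x j)) / (-2 * x j)

/-- Δ = c₊ Δ₊. -/
def Dfull (n : ℕ) (a b c d t : ℂ) (x : Fin n → ℂ) : ℂ :=
  cplus n a b t x * Dplus n a b c d t x

lemma gamma_ne_zero' {z : ℂ} (h : ∀ m : ℤ, z ≠ (m : ℂ)) : Complex.Gamma z ≠ 0 :=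
  Complex.Gamma_ne_zero fun m => by
    have := h (-(m : ℤ)); push_cast at this; simpa using this

lemma ne_int_neg {z : ℂ} (h : ∀ m : ℤ, z ≠ (m : ℂ)) : ∀ m : ℤ, -z ≠ (m : ℂ) := fun m hm =>
  h (-m) (by push_cast; linear_combination -hm)

lemma Gpm_ne_zero {u v : ℂ} (h1 : ∀ m : ℤ, u + v ≠ (m : ℂ)) (h2 : ∀ m : ℤ, u - v ≠ (m : ℂ)) :
    Gpm u v ≠ 0 := mul_ne_zero (gamma_ne_zero' h1) (gamma_ne_zero' h2)

lemma GpmA (u y : ℂ) (h1 : u + y ≠ 0) (h2 : u - y ≠ 0) :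
    Gpm (u + 1) y = (u + y) * (u - y) * Gpm u y := by
  unfold Gpm
  rw [show u + 1 + y = (u + y) + 1 by ring, show u + 1 - y = (u - y) + 1 by ring,
    Complex.Gamma_add_one _ h1, Complex.Gamma_add_one _ h2]; ring

lemma GpmB (u y : ℂ) (h1 : u + y - 1 ≠ 0) (h2 : u - y - 1 ≠ 0) :
    Gpm (u - 1) y = Gpm u y / ((u + y - 1) * (u - y - 1)) := by
  unfold Gpm
  have e1 : Complex.Gamma (u + y) = (u + y - 1) * Complex.Gamma (u - 1 + y) := by
    conv_lhs => rw [show u + y = (u + y - 1) + 1 by ring]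
    rw [Complex.Gamma_add_one _ h1]; congr 2; ring
  have e2 : Complex.Gamma (u - y) = (u - y - 1) * Complex.Gamma (u - 1 - y) := by
    conv_lhs => rw [show u - y = (u - y - 1) + 1 by ring]
    rw [Complex.Gamma_add_one _ h2]; congr 2; ring
  rw [e1, e2]; field_simp

lemma GpmC (p x : ℂ) (h1 : p - x ≠ 0) (h2 : p + x - 1 ≠ 0) :
    Gpm p (1 - x) = (p - x) * Gpm p x / (p + x - 1) := by
  unfold Gpm
  have e : Complex.Gamma (p + x) = (p + x - 1) * Complex.Gamma (p + x - 1) := by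
    conv_lhs => rw [show p + x = (p + x - 1) + 1 by ring]
    rw [Complex.Gamma_add_one _ h2]
  rw [show p + (1 - x) = (p - x) + 1 by ring, show p - (1 - x) = p + x - 1 by ring,
    Complex.Gamma_add_one _ h1, e]
  field_simp

lemma Gpm_neg_right (u v : ℂ) : Gpm u (-v) = Gpm u v := by
  unfold Gpm
  rw [show u + -v = u - v by ring, show u - -v = u + v by ring, mul_comm]

lemma Gpm_pair_symm (t u v : ℂ) :
    Gpm (t + u) v * Gpm (t - u) v = Gpm (t + v) u * Gpm (t - v) u := by
  unfold Gpm
  rw [show t + u + v = t + v + u by ring, show t + u - v = t - v + u by ring,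
    show t - u + v = t + v - u by ring, show t - u - v = t - v - u by ring]
  ring

lemma Gpm_neg_pair (u v : ℂ) : Gpm u v * Gpm (-u) v = Gpm v u * Gpm (-v) u := by
  unfold Gpm
  rw [show u + v = v + u by ring, show u - v = -v + u by ring,
    show -u + v = v - u by ring, show -u - v = -v - u by ring]
  ring
noncomputable section

lemma prod_Ioi_split {n : ℕ} (i j : Fin n) (hij : (i : ℕ) + 1 = (j : ℕ))
    (f : Fin n → Fin n → ℂ) :
    (∏ l, ∏ k ∈ Finset.Ioi l, f l k)
      = f i j * ((∏ k ∈ Finset.Ioi j, f i k) * (∏ k ∈ Finset.Ioi j, f j k)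
          * ∏ l ∈ (Finset.univ.erase i).erase j, ∏ k ∈ Finset.Ioi l, f l k) := by
  have hne : j ≠ i := Fin.ne_of_val_ne (by omega)
  have hIoi : Finset.Ioi i = insert j (Finset.Ioi j) := by
    ext k
    simp only [Finset.mem_Ioi, Finset.mem_insert, Fin.lt_def, Fin.ext_iff]
    omega
  rw [← Finset.mul_prod_erase Finset.univ _ (Finset.mem_univ i),
    ← Finset.mul_prod_erase _ _ (Finset.mem_erase.2 ⟨hne, Finset.mem_univ j⟩),
    hIoi, Finset.prod_insert Finset.notMem_Ioi_self]
  ring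

lemma swap_fix {n : ℕ} {i j k : Fin n} (hij : (i : ℕ) + 1 = (j : ℕ)) (hk : j < k) :
    Equiv.swap i j k = k :=
  Equiv.swap_apply_of_ne_of_ne (Fin.ne_of_val_ne (by have := (Fin.lt_def).1 hk; omega))
    (Fin.ne_of_val_ne (by have := (Fin.lt_def).1 hk; omega))

lemma swap_double {n : ℕ} (i j : Fin n) (hij : (i : ℕ) + 1 = (j : ℕ))
    (F : ℂ → ℂ → ℂ) (x : Fin n → ℂ) :
    (∏ l, ∏ k ∈ Finset.Ioi l, F ((x ∘ Equiv.swap i j) l) ((x ∘ Equiv.swap i j) k))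
      = F (x j) (x i) * ((∏ k ∈ Finset.Ioi j, F (x j) (x k)) * (∏ k ∈ Finset.Ioi j, F (x i) (x k))
          * ∏ l ∈ (Finset.univ.erase i).erase j, ∏ k ∈ Finset.Ioi l, F (x l) (x k)) := by
  rw [prod_Ioi_split i j hij (fun l k => F ((x ∘ Equiv.swap i j) l) ((x ∘ Equiv.swap i j) k))]
  simp only [Function.comp_apply, Equiv.swap_apply_left, Equiv.swap_apply_right]
  have e1 : ∀ z : ℂ, (∏ k ∈ Finset.Ioi j, F z (x ((Equiv.swap i j) k)))
      = ∏ k ∈ Finset.Ioi j, F z (x k) := by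
    intro z
    refine Finset.prod_congr rfl fun k hk => ?_
    rw [swap_fix hij (Finset.mem_Ioi.1 hk)]
  rw [e1, e1]
  have e2 : (∏ l ∈ (Finset.univ.erase i).erase j,
        ∏ k ∈ Finset.Ioi l, F (x ((Equiv.swap i j) l)) (x ((Equiv.swap i j) k)))
      = ∏ l ∈ (Finset.univ.erase i).erase j, ∏ k ∈ Finset.Ioi l, F (x l) (x k) := by
    refine Finset.prod_congr rfl fun l hl => ?_
    have hlj : l ≠ j := (Finset.mem_erase.1 hl).1
    have hli : l ≠ i := (Finset.mem_erase.1 (Finset.mem_erase.1 hl).2).1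
    rw [Equiv.swap_apply_of_ne_of_ne hli hlj]
    by_cases hcase : (l : ℕ) < (i : ℕ)
    · refine Equiv.Perm.prod_comp _ _ (fun k => F (x l) (x k)) ?_
      intro a ha
      have : a = i ∨ a = j := by
        by_contra hcon
        push_neg at hcon
        exact ha (Equiv.swap_apply_of_ne_of_ne hcon.1 hcon.2)
      rcases this with rfl | rfl <;>
        · simp only [Finset.coe_Ioi, Set.mem_Ioi, Fin.lt_def]; omega
    · have h1 : (l : ℕ) ≠ (i : ℕ) := fun h => hli (Fin.ext h)
      have h2 : (l : ℕ) ≠ (j : ℕ) := fun h => hlj (Fin.ext h)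
      refine Finset.prod_congr rfl fun k hk => ?_
      have hk' := (Fin.lt_def).1 (Finset.mem_Ioi.1 hk)
      rw [Equiv.swap_apply_of_ne_of_ne (Fin.ne_of_val_ne (by omega))
        (Fin.ne_of_val_ne (by omega))]
  rw [e2]

lemma swap_single {n : ℕ} (i j : Fin n) (g : ℂ → ℂ) (x : Fin n → ℂ) :
    (∏ l, g ((x ∘ Equiv.swap i j) l)) = ∏ l, g (x l) :=
  Equiv.prod_comp (Equiv.swap i j) (fun l => g (x l))



theorem part1 {n : ℕ} (a b c d t : ℂ) (i j : Fin n) (hij : (i : ℕ) + 1 = (j : ℕ))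
    (x : Fin n → ℂ) (hsq : (x i) ^ 2 ≠ (x j) ^ 2) :
    ((t + x i - x j) / (x i - x j)) * Dfull n a b c d t x
      = ((t + (x ∘ Equiv.swap i j) i - (x ∘ Equiv.swap i j) j)
          / ((x ∘ Equiv.swap i j) i - (x ∘ Equiv.swap i j) j))
          * Dfull n a b c d t (x ∘ Equiv.swap i j) := by
  simp only [Dfull, Dplus, cplus]
  have hD := swap_double i j hij
    (fun u v => (Gpm (t + u) v * Gpm (t - u) v) / (Gpm u v * Gpm (-u) v)) x
  have hC := swap_double i j hij
    (fun u v => ((t - u + v) * (t - u - v)) / ((v + u) * (v - u))) x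
  have hD' := prod_Ioi_split i j hij
    (fun l k => (Gpm (t + x l) (x k) * Gpm (t - x l) (x k)) / (Gpm (x l) (x k) * Gpm (-(x l)) (x k)))
  have hC' := prod_Ioi_split i j hij
    (fun l k => ((t - x l + x k) * (t - x l - x k)) / ((x k + x l) * (x k - x l)))
  rw [hD, hC, hD', hC',
    swap_single i j (fun v => (Gpm a v * Gpm b v * Gpm c v * Gpm d v)
      / (Complex.Gamma (2 * v) * Complex.Gamma (-(2 * v)))) x,
    swap_single i j (fun v => ((a - v) * (b - v)) / (-2 * v)) x]
  simp only [Function.comp_apply, Equiv.swap_apply_left, Equiv.swap_apply_right]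
  set A := ∏ k ∈ Finset.Ioi j, (t - x i + x k) * (t - x i - x k) / ((x k + x i) * (x k - x i)) with hA
  set B := ∏ k ∈ Finset.Ioi j, (t - x j + x k) * (t - x j - x k) / ((x k + x j) * (x k - x j)) with hB
  set RC := ∏ l ∈ (Finset.univ.erase i).erase j,
      ∏ k ∈ Finset.Ioi l, (t - x l + x k) * (t - x l - x k) / ((x k + x l) * (x k - x l)) with hRC
  set SC := ∏ l, (a - x l) * (b - x l) / (-2 * x l) with hSC
  set CC := ∏ k ∈ Finset.Ioi j, Gpm (t + x i) (x k) * Gpm (t - x i) (x k) / (Gpm (x i) (x k) * Gpm (-x i) (x k)) with hCC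
  set EE := ∏ k ∈ Finset.Ioi j, Gpm (t + x j) (x k) * Gpm (t - x j) (x k) / (Gpm (x j) (x k) * Gpm (-x j) (x k)) with hEE
  set RD := ∏ l ∈ (Finset.univ.erase i).erase j,
      ∏ k ∈ Finset.Ioi l, Gpm (t + x l) (x k) * Gpm (t - x l) (x k) / (Gpm (x l) (x k) * Gpm (-x l) (x k)) with hRD
  set SD := ∏ l, Gpm a (x l) * Gpm b (x l) * Gpm c (x l) * Gpm d (x l) /
      (Complex.Gamma (2 * x l) * Complex.Gamma (-(2 * x l))) with hSD
  have hne : i ≠ j := Fin.ne_of_val_ne (by omega)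
  have h1 : x i - x j ≠ 0 := by
    intro h; exact hsq (by rw [sub_eq_zero] at h; rw [h])
  have h2 : x i + x j ≠ 0 := by
    intro h
    apply hsq
    have : x i = -x j := by linear_combination h
    rw [this]; ring
  have h3 : x j - x i ≠ 0 := by intro h; exact h1 (by linear_combination -h)
  have h4 : x j + x i ≠ 0 := by intro h; exact h2 (by linear_combination h)
  have hsymm : Gpm (t + x j) (x i) * Gpm (t - x j) (x i) / (Gpm (x j) (x i) * Gpm (-x j) (x i))
      = Gpm (t + x i) (x j) * Gpm (t - x i) (x j) / (Gpm (x i) (x j) * Gpm (-x i) (x j)) := by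
    rw [Gpm_pair_symm t (x j) (x i), Gpm_neg_pair (x j) (x i)]
  have key : (t + x i - x j) / (x i - x j)
        * ((t - x i + x j) * (t - x i - x j) / ((x j + x i) * (x j - x i)))
      = (t + x j - x i) / (x j - x i)
        * ((t - x j + x i) * (t - x j - x i) / ((x i + x j) * (x i - x j))) := by
    field_simp
    ring
  rw [hsymm]
  linear_combination key * (A * B * RC * SC * CC * EE * RD * SD *
    (Gpm (t + x i) (x j) * Gpm (t - x i) (x j) / (Gpm (x i) (x j) * Gpm (-x i) (x j))))

theorem part2 {n : ℕ} (a b c d t : ℂ) (i : Fin n) (hi : Finset.Ioi i = ∅) (x : Fin n → ℂ) :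
    ((a + x i) * (b + x i) / (2 * x i)) * Dfull n a b c d t x
      = ((a - x i) * (b - x i) / (-2 * x i))
          * Dfull n a b c d t (Function.update x i (-(x i))) := by
  set x' := Function.update x i (-(x i)) with hx'
  have hxi : x' i = -(x i) := Function.update_self i _ x
  have hxl : ∀ l, l ≠ i → x' l = x l := fun l hl => Function.update_of_ne hl _ x
  simp only [Dfull, Dplus, cplus]
  have eDD : (∏ l, ∏ k ∈ Finset.Ioi l,
        Gpm (t + x' l) (x' k) * Gpm (t - x' l) (x' k) / (Gpm (x' l) (x' k) * Gpm (-(x' l)) (x' k)))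
      = ∏ l, ∏ k ∈ Finset.Ioi l,
        Gpm (t + x l) (x k) * Gpm (t - x l) (x k) / (Gpm (x l) (x k) * Gpm (-(x l)) (x k)) := by
    refine Finset.prod_congr rfl fun l _ => ?_
    rcases eq_or_ne l i with rfl | hl
    · rw [hi]; simp
    · rw [hxl l hl]
      refine Finset.prod_congr rfl fun k _ => ?_
      rcases eq_or_ne k i with rfl | hk
      · rw [hxi, Gpm_neg_right, Gpm_neg_right, Gpm_neg_right, Gpm_neg_right]
      · rw [hxl k hk]
  have eCD : (∏ l, ∏ k ∈ Finset.Ioi l,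
        (t - x' l + x' k) * (t - x' l - x' k) / ((x' k + x' l) * (x' k - x' l)))
      = ∏ l, ∏ k ∈ Finset.Ioi l,
        (t - x l + x k) * (t - x l - x k) / ((x k + x l) * (x k - x l)) := by
    refine Finset.prod_congr rfl fun l _ => ?_
    rcases eq_or_ne l i with rfl | hl
    · rw [hi]; simp
    · rw [hxl l hl]
      refine Finset.prod_congr rfl fun k _ => ?_
      rcases eq_or_ne k i with rfl | hk
      · rw [hxi]; ring
      · rw [hxl k hk]
  have eDS : (∏ l, Gpm a (x' l) * Gpm b (x' l) * Gpm c (x' l) * Gpm d (x' l) /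
        (Complex.Gamma (2 * x' l) * Complex.Gamma (-(2 * x' l))))
      = ∏ l, Gpm a (x l) * Gpm b (x l) * Gpm c (x l) * Gpm d (x l) /
        (Complex.Gamma (2 * x l) * Complex.Gamma (-(2 * x l))) := by
    refine Finset.prod_congr rfl fun l _ => ?_
    rcases eq_or_ne l i with rfl | hl
    · rw [hxi, Gpm_neg_right, Gpm_neg_right, Gpm_neg_right, Gpm_neg_right,
        show (2 : ℂ) * -(x l) = -(2 * x l) by ring, neg_neg,
        mul_comm (Complex.Gamma (-(2 * x l)))]
    · rw [hxl l hl]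
  have eCS : (∏ l, (a - x' l) * (b - x' l) / (-2 * x' l))
      = ((a - -(x i)) * (b - -(x i)) / (-2 * -(x i)))
          * ∏ l ∈ Finset.univ.erase i, (a - x l) * (b - x l) / (-2 * x l) := by
    rw [← Finset.mul_prod_erase Finset.univ _ (Finset.mem_univ i), hxi]
    congr 1
    exact Finset.prod_congr rfl fun l hl => by rw [hxl l (Finset.mem_erase.1 hl).1]
  have eCS' : (∏ l, (a - x l) * (b - x l) / (-2 * x l))
      = ((a - x i) * (b - x i) / (-2 * x i))
          * ∏ l ∈ Finset.univ.erase i, (a - x l) * (b - x l) / (-2 * x l) :=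
    (Finset.mul_prod_erase Finset.univ _ (Finset.mem_univ i)).symm
  rw [eDD, eCD, eDS, eCS, eCS']
  ring

lemma GpmB' (u y : ℂ) (h1 : u + y - 1 ≠ 0) (h2 : u - y - 1 ≠ 0) :
    Gpm u y = (u + y - 1) * (u - y - 1) * Gpm (u - 1) y := by
  rw [GpmB u y h1 h2]; field_simp

set_option maxHeartbeats 2000000 in
lemma pair_inv (t x0 y : ℂ)
    (hp : ∀ m : ℤ, x0 + y ≠ (m : ℂ)) (hm : ∀ m : ℤ, x0 - y ≠ (m : ℂ))
    (h1 : ∀ m : ℤ, t + x0 + y ≠ (m : ℂ)) (h2 : ∀ m : ℤ, t + x0 - y ≠ (m : ℂ))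
    (h3 : ∀ m : ℤ, t - x0 + y ≠ (m : ℂ)) (h4 : ∀ m : ℤ, t - x0 - y ≠ (m : ℂ)) :
    ((t - (1 - x0) + y) * (t - (1 - x0) - y) / ((y + (1 - x0)) * (y - (1 - x0)))) *
      (Gpm (t + (1 - x0)) y * Gpm (t - (1 - x0)) y / (Gpm (1 - x0) y * Gpm (-(1 - x0)) y))
    = ((t - x0 + y) * (t - x0 - y) / ((y + x0) * (y - x0))) *
      (Gpm (t + x0) y * Gpm (t - x0) y / (Gpm x0 y * Gpm (-x0) y)) := by
  have n1 : t - x0 + y ≠ 0 := by simpa using h3 0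
  have n2 : t - x0 - y ≠ 0 := by simpa using h4 0
  have n3 : t + x0 + y - 1 ≠ 0 := sub_ne_zero.2 (by simpa using h1 1)
  have n4 : t + x0 - y - 1 ≠ 0 := sub_ne_zero.2 (by simpa using h2 1)
  have n5 : -x0 + y ≠ 0 := fun h => (hm 0) (by push_cast; linear_combination -h)
  have n6 : -x0 - y ≠ 0 := fun h => (hp 0) (by push_cast; linear_combination -h)
  have n7 : x0 + y - 1 ≠ 0 := sub_ne_zero.2 (by simpa using hp 1)
  have n8 : x0 - y - 1 ≠ 0 := sub_ne_zero.2 (by simpa using hm 1)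
  have G1 : Gpm x0 y ≠ 0 := Gpm_ne_zero hp hm
  have G2 : Gpm (-x0) y ≠ 0 :=
    Gpm_ne_zero (fun m h => hm (-m) (by push_cast; linear_combination -h))
      (fun m h => hp (-m) (by push_cast; linear_combination -h))
  have G3 : Gpm (t + x0) y ≠ 0 := Gpm_ne_zero h1 h2
  have G4 : Gpm (t - x0) y ≠ 0 := Gpm_ne_zero h3 h4
  have d1 : y + x0 ≠ 0 := fun h => (show x0 + y ≠ 0 by simpa using hp 0) (by linear_combination h)
  have d2 : y - x0 ≠ 0 := fun h => n5 (by linear_combination h)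
  have d3 : y + (1 - x0) ≠ 0 := fun h => n8 (by linear_combination -h)
  have d4 : y - (1 - x0) ≠ 0 := fun h => n7 (by linear_combination h)
  have G5 : Gpm (x0 - 1) y ≠ 0 :=
    Gpm_ne_zero (fun m h => hp (m + 1) (by push_cast; linear_combination h))
      (fun m h => hm (m + 1) (by push_cast; linear_combination h))
  rw [show t + (1 - x0) = (t - x0) + 1 by ring, show t - (1 - x0) = (t + x0) - 1 by ring,
    GpmA (t - x0) y n1 n2,
    show (1 : ℂ) - x0 = -x0 + 1 by ring, show -(-x0 + 1) = x0 - 1 by ring,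
    GpmA (-x0) y n5 n6, GpmB' (t + x0) y n3 n4, GpmB' x0 y n7 n8]
  field_simp [G2, G5, d1, d2, d3, d4]
  rw [div_eq_iff (mul_ne_zero (by rwa [show y + (-x0 + 1) = y + (1 - x0) by ring])
    (by rwa [show y - (-x0 + 1) = y - (1 - x0) by ring]))]
  ring

lemma GpmL (p x : ℂ) (h1 : p - x ≠ 0) :
    Gpm p (1 - x) = (p - x) * (Complex.Gamma (p - x) * Complex.Gamma (p + x - 1)) := by
  unfold Gpm
  rw [show p + (1 - x) = (p - x) + 1 by ring, Complex.Gamma_add_one _ h1,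
    show p - (1 - x) = p + x - 1 by ring]
  ring

lemma GpmR (p x : ℂ) (h2 : p + x - 1 ≠ 0) :
    Gpm p x = (p + x - 1) * (Complex.Gamma (p - x) * Complex.Gamma (p + x - 1)) := by
  unfold Gpm
  conv_lhs => rw [show p + x = (p + x - 1) + 1 by ring]
  rw [Complex.Gamma_add_one _ h2]; ring

set_option maxHeartbeats 2000000 in
lemma single_inv (a b c d x0 : ℂ) (h2x : ∀ m : ℤ, 2 * x0 ≠ (m : ℂ))
    (hap : ∀ m : ℤ, a + x0 ≠ (m : ℂ)) (ham : ∀ m : ℤ, a - x0 ≠ (m : ℂ))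
    (hbp : ∀ m : ℤ, b + x0 ≠ (m : ℂ)) (hbm : ∀ m : ℤ, b - x0 ≠ (m : ℂ))
    (hcp : ∀ m : ℤ, c + x0 ≠ (m : ℂ)) (hcm : ∀ m : ℤ, c - x0 ≠ (m : ℂ))
    (hdp : ∀ m : ℤ, d + x0 ≠ (m : ℂ)) (hdm : ∀ m : ℤ, d - x0 ≠ (m : ℂ)) :
    ((c - (1 - x0)) * (d - (1 - x0)) / (1 - 2 * (1 - x0))) *
      (((a - (1 - x0)) * (b - (1 - x0)) / (-2 * (1 - x0))) *
        (Gpm a (1 - x0) * Gpm b (1 - x0) * Gpm c (1 - x0) * Gpm d (1 - x0) /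
          (Complex.Gamma (2 * (1 - x0)) * Complex.Gamma (-(2 * (1 - x0))))))
    = ((c - x0) * (d - x0) / (1 - 2 * x0)) *
      (((a - x0) * (b - x0) / (-2 * x0)) *
        (Gpm a x0 * Gpm b x0 * Gpm c x0 * Gpm d x0 /
          (Complex.Gamma (2 * x0) * Complex.Gamma (-(2 * x0))))) := by
  have nA1 : a - x0 ≠ 0 := by simpa using ham 0
  have nA2 : a + x0 - 1 ≠ 0 := sub_ne_zero.2 (by simpa using hap 1)
  have nB1 : b - x0 ≠ 0 := by simpa using hbm 0
  have nB2 : b + x0 - 1 ≠ 0 := sub_ne_zero.2 (by simpa using hbp 1)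
  have nC1 : c - x0 ≠ 0 := by simpa using hcm 0
  have nC2 : c + x0 - 1 ≠ 0 := sub_ne_zero.2 (by simpa using hcp 1)
  have nD1 : d - x0 ≠ 0 := by simpa using hdm 0
  have nD2 : d + x0 - 1 ≠ 0 := sub_ne_zero.2 (by simpa using hdp 1)
  have n2x : (2 : ℂ) * x0 ≠ 0 := by simpa using h2x 0
  have nm2x : -((2 : ℂ) * x0) ≠ 0 := neg_ne_zero.2 n2x
  have n2x1 : 2 * x0 - 1 ≠ 0 := sub_ne_zero.2 (by simpa using h2x 1)
  have n2x2 : 2 * x0 - 2 ≠ 0 := sub_ne_zero.2 (by simpa using h2x 2)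
  have n1m2x : 1 - 2 * x0 ≠ 0 := fun h => n2x1 (by linear_combination -h)
  have G2x : Complex.Gamma (-(2 * x0)) ≠ 0 := gamma_ne_zero' (ne_int_neg h2x)
  have G2x2 : Complex.Gamma (2 * x0 - 2) ≠ 0 :=
    gamma_ne_zero' fun m h => h2x (m + 2) (by push_cast; linear_combination h)
  have dd1 : 1 - 2 * (1 - x0) ≠ 0 := fun h => n2x1 (by linear_combination h)
  have dd2 : -2 * (1 - x0) ≠ 0 := fun h => n2x2 (by linear_combination h)
  have eL1 : Complex.Gamma (2 * (1 - x0))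
      = (1 - 2 * x0) * (-(2 * x0) * Complex.Gamma (-(2 * x0))) := by
    rw [show (2 : ℂ) * (1 - x0) = (1 - 2 * x0) + 1 by ring, Complex.Gamma_add_one _ n1m2x]
    congr 1
    conv_lhs => rw [show (1 : ℂ) - 2 * x0 = (-(2 * x0)) + 1 by ring]
    rw [Complex.Gamma_add_one _ nm2x]
  have eL2 : Complex.Gamma (-(2 * (1 - x0))) = Complex.Gamma (2 * x0 - 2) := by
    rw [show -((2 : ℂ) * (1 - x0)) = 2 * x0 - 2 by ring]
  have eR1 : Complex.Gamma (2 * x0)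
      = (2 * x0 - 1) * ((2 * x0 - 2) * Complex.Gamma (2 * x0 - 2)) := by
    conv_lhs => rw [show (2 : ℂ) * x0 = ((2 * x0 - 2) + 1) + 1 by ring]
    rw [Complex.Gamma_add_one _ (by intro h; exact n2x1 (by linear_combination h)),
      Complex.Gamma_add_one _ n2x2]
    ring
  rw [GpmL a x0 nA1, GpmL b x0 nB1, GpmL c x0 nC1, GpmL d x0 nD1,
    GpmR a x0 nA2, GpmR b x0 nB2, GpmR c x0 nC2, GpmR d x0 nD2, eL1, eL2, eR1]
  have hx0 : x0 ≠ 0 := fun h => n2x (by rw [h]; ring)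
  have h1x : 1 - x0 ≠ 0 := fun h => dd2 (by rw [h]; ring)
  have hx1 : x0 - 1 ≠ 0 := fun h => n2x2 (by linear_combination 2 * h)
  have hq1 : 1 - (1 - x0) * 2 ≠ 0 := by rwa [show 1 - (1 - x0) * 2 = 1 - 2 * (1 - x0) by ring]
  have hq2 : 1 - x0 * 2 ≠ 0 := by rwa [mul_comm]
  have hq3 : x0 * 2 - 1 ≠ 0 := by rwa [mul_comm]
  have hq4 : Complex.Gamma (2 * (x0 - 1)) ≠ 0 := by rwa [show 2 * (x0 - 1) = 2 * x0 - 2 by ring]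
  field_simp [G2x, G2x2, n1m2x, n2x, n2x1, n2x2, dd1, dd2]
  ring

set_option maxHeartbeats 1000000 in
theorem part3 {n : ℕ} (a b c d t : ℂ) (i : Fin n) (hmin : ∀ l : Fin n, l ≠ i → i < l)
    (x : Fin n → ℂ)
    (h2x : ∀ m : ℤ, 2 * x i ≠ (m : ℂ))
    (hpr : ∀ k : Fin n, k ≠ i → ∀ m : ℤ,
      x i + x k ≠ (m : ℂ) ∧ x i - x k ≠ (m : ℂ) ∧ t + x i + x k ≠ (m : ℂ) ∧
      t + x i - x k ≠ (m : ℂ) ∧ t - x i + x k ≠ (m : ℂ) ∧ t - x i - x k ≠ (m : ℂ))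
    (hab : ∀ m : ℤ, a + x i ≠ (m : ℂ) ∧ a - x i ≠ (m : ℂ) ∧ b + x i ≠ (m : ℂ) ∧
      b - x i ≠ (m : ℂ) ∧ c + x i ≠ (m : ℂ) ∧ c - x i ≠ (m : ℂ) ∧ d + x i ≠ (m : ℂ) ∧
      d - x i ≠ (m : ℂ)) :
    ((c - x i) * (d - x i) / (1 - 2 * x i)) * Dfull n a b c d t x
      = ((c - (1 - x i)) * (d - (1 - x i)) / (1 - 2 * (1 - x i)))
          * Dfull n a b c d t (Function.update x i (1 - x i)) := by
  set x' := Function.update x i (1 - x i) with hx'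
  have hxi : x' i = 1 - x i := Function.update_self i _ x
  have hxl : ∀ l, l ≠ i → x' l = x l := fun l hl => Function.update_of_ne hl _ x
  have hkne : ∀ k : Fin n, k ∈ Finset.Ioi i → k ≠ i := fun k hk =>
    (Finset.mem_Ioi.1 hk).ne'
  simp only [Dfull, Dplus, cplus]
  have eD' : (∏ l, ∏ k ∈ Finset.Ioi l,
        Gpm (t + x' l) (x' k) * Gpm (t - x' l) (x' k) / (Gpm (x' l) (x' k) * Gpm (-(x' l)) (x' k)))
      = (∏ k ∈ Finset.Ioi i, Gpm (t + (1 - x i)) (x k) * Gpm (t - (1 - x i)) (x k)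
            / (Gpm (1 - x i) (x k) * Gpm (-(1 - x i)) (x k)))
          * ∏ l ∈ Finset.univ.erase i, ∏ k ∈ Finset.Ioi l,
              Gpm (t + x l) (x k) * Gpm (t - x l) (x k) / (Gpm (x l) (x k) * Gpm (-(x l)) (x k)) := by
    rw [← Finset.mul_prod_erase Finset.univ _ (Finset.mem_univ i)]
    congr 1
    · exact Finset.prod_congr rfl fun k hk => by rw [hxi, hxl k (hkne k hk)]
    · refine Finset.prod_congr rfl fun l hl => ?_
      have hli : l ≠ i := (Finset.mem_erase.1 hl).1
      rw [hxl l hli]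
      refine Finset.prod_congr rfl fun k hk => ?_
      rw [hxl k (ne_of_gt (lt_trans (hmin l hli) (Finset.mem_Ioi.1 hk)))]
  have eD : (∏ l, ∏ k ∈ Finset.Ioi l,
        Gpm (t + x l) (x k) * Gpm (t - x l) (x k) / (Gpm (x l) (x k) * Gpm (-(x l)) (x k)))
      = (∏ k ∈ Finset.Ioi i, Gpm (t + x i) (x k) * Gpm (t - x i) (x k)
            / (Gpm (x i) (x k) * Gpm (-(x i)) (x k)))
          * ∏ l ∈ Finset.univ.erase i, ∏ k ∈ Finset.Ioi l,
              Gpm (t + x l) (x k) * Gpm (t - x l) (x k) / (Gpm (x l) (x k) * Gpm (-(x l)) (x k)) :=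
    (Finset.mul_prod_erase Finset.univ _ (Finset.mem_univ i)).symm
  have eC' : (∏ l, ∏ k ∈ Finset.Ioi l,
        (t - x' l + x' k) * (t - x' l - x' k) / ((x' k + x' l) * (x' k - x' l)))
      = (∏ k ∈ Finset.Ioi i, (t - (1 - x i) + x k) * (t - (1 - x i) - x k)
            / ((x k + (1 - x i)) * (x k - (1 - x i))))
          * ∏ l ∈ Finset.univ.erase i, ∏ k ∈ Finset.Ioi l,
              (t - x l + x k) * (t - x l - x k) / ((x k + x l) * (x k - x l)) := by
    rw [← Finset.mul_prod_erase Finset.univ _ (Finset.mem_univ i)]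
    congr 1
    · exact Finset.prod_congr rfl fun k hk => by rw [hxi, hxl k (hkne k hk)]
    · refine Finset.prod_congr rfl fun l hl => ?_
      have hli : l ≠ i := (Finset.mem_erase.1 hl).1
      rw [hxl l hli]
      refine Finset.prod_congr rfl fun k hk => ?_
      rw [hxl k (ne_of_gt (lt_trans (hmin l hli) (Finset.mem_Ioi.1 hk)))]
  have eC : (∏ l, ∏ k ∈ Finset.Ioi l,
        (t - x l + x k) * (t - x l - x k) / ((x k + x l) * (x k - x l)))
      = (∏ k ∈ Finset.Ioi i, (t - x i + x k) * (t - x i - x k)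
            / ((x k + x i) * (x k - x i)))
          * ∏ l ∈ Finset.univ.erase i, ∏ k ∈ Finset.Ioi l,
              (t - x l + x k) * (t - x l - x k) / ((x k + x l) * (x k - x l)) :=
    (Finset.mul_prod_erase Finset.univ _ (Finset.mem_univ i)).symm
  have eS' : (∏ l, Gpm a (x' l) * Gpm b (x' l) * Gpm c (x' l) * Gpm d (x' l) /
        (Complex.Gamma (2 * x' l) * Complex.Gamma (-(2 * x' l))))
      = (Gpm a (1 - x i) * Gpm b (1 - x i) * Gpm c (1 - x i) * Gpm d (1 - x i) /
          (Complex.Gamma (2 * (1 - x i)) * Complex.Gamma (-(2 * (1 - x i)))))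
          * ∏ l ∈ Finset.univ.erase i, Gpm a (x l) * Gpm b (x l) * Gpm c (x l) * Gpm d (x l) /
              (Complex.Gamma (2 * x l) * Complex.Gamma (-(2 * x l))) := by
    rw [← Finset.mul_prod_erase Finset.univ _ (Finset.mem_univ i), hxi]
    congr 1
    exact Finset.prod_congr rfl fun l hl => by rw [hxl l (Finset.mem_erase.1 hl).1]
  have eS : (∏ l, Gpm a (x l) * Gpm b (x l) * Gpm c (x l) * Gpm d (x l) /
        (Complex.Gamma (2 * x l) * Complex.Gamma (-(2 * x l))))
      = (Gpm a (x i) * Gpm b (x i) * Gpm c (x i) * Gpm d (x i) /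
          (Complex.Gamma (2 * x i) * Complex.Gamma (-(2 * x i))))
          * ∏ l ∈ Finset.univ.erase i, Gpm a (x l) * Gpm b (x l) * Gpm c (x l) * Gpm d (x l) /
              (Complex.Gamma (2 * x l) * Complex.Gamma (-(2 * x l))) :=
    (Finset.mul_prod_erase Finset.univ _ (Finset.mem_univ i)).symm
  have eT' : (∏ l, (a - x' l) * (b - x' l) / (-2 * x' l))
      = ((a - (1 - x i)) * (b - (1 - x i)) / (-2 * (1 - x i)))
          * ∏ l ∈ Finset.univ.erase i, (a - x l) * (b - x l) / (-2 * x l) := by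
    rw [← Finset.mul_prod_erase Finset.univ _ (Finset.mem_univ i), hxi]
    congr 1
    exact Finset.prod_congr rfl fun l hl => by rw [hxl l (Finset.mem_erase.1 hl).1]
  have eT : (∏ l, (a - x l) * (b - x l) / (-2 * x l))
      = ((a - x i) * (b - x i) / (-2 * x i))
          * ∏ l ∈ Finset.univ.erase i, (a - x l) * (b - x l) / (-2 * x l) :=
    (Finset.mul_prod_erase Finset.univ _ (Finset.mem_univ i)).symm
  rw [eD', eD, eC', eC, eS', eS, eT', eT]
  have hpairs : (∏ k ∈ Finset.Ioi i, (t - (1 - x i) + x k) * (t - (1 - x i) - x k)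
            / ((x k + (1 - x i)) * (x k - (1 - x i))))
          * (∏ k ∈ Finset.Ioi i, Gpm (t + (1 - x i)) (x k) * Gpm (t - (1 - x i)) (x k)
            / (Gpm (1 - x i) (x k) * Gpm (-(1 - x i)) (x k)))
      = (∏ k ∈ Finset.Ioi i, (t - x i + x k) * (t - x i - x k)
            / ((x k + x i) * (x k - x i)))
          * (∏ k ∈ Finset.Ioi i, Gpm (t + x i) (x k) * Gpm (t - x i) (x k)
            / (Gpm (x i) (x k) * Gpm (-(x i)) (x k))) := by
    rw [← Finset.prod_mul_distrib, ← Finset.prod_mul_distrib]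
    refine Finset.prod_congr rfl fun k hk => ?_
    exact pair_inv t (x i) (x k)
      (fun m => (hpr k (hkne k hk) m).1) (fun m => (hpr k (hkne k hk) m).2.1)
      (fun m => (hpr k (hkne k hk) m).2.2.1) (fun m => (hpr k (hkne k hk) m).2.2.2.1)
      (fun m => (hpr k (hkne k hk) m).2.2.2.2.1) (fun m => (hpr k (hkne k hk) m).2.2.2.2.2)
  have hsingle := single_inv a b c d (x i) h2x
    (fun m => (hab m).1) (fun m => (hab m).2.1) (fun m => (hab m).2.2.1)
    (fun m => (hab m).2.2.2.1) (fun m => (hab m).2.2.2.2.1) (fun m => (hab m).2.2.2.2.2.1)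
    (fun m => (hab m).2.2.2.2.2.2.1) (fun m => (hab m).2.2.2.2.2.2.2)
  set PC := ∏ k ∈ Finset.Ioi i, (t - x i + x k) * (t - x i - x k) / ((x k + x i) * (x k - x i))
  set PC' := ∏ k ∈ Finset.Ioi i, (t - (1 - x i) + x k) * (t - (1 - x i) - x k)
      / ((x k + (1 - x i)) * (x k - (1 - x i)))
  set PD := ∏ k ∈ Finset.Ioi i, Gpm (t + x i) (x k) * Gpm (t - x i) (x k)
      / (Gpm (x i) (x k) * Gpm (-(x i)) (x k))
  set PD' := ∏ k ∈ Finset.Ioi i, Gpm (t + (1 - x i)) (x k) * Gpm (t - (1 - x i)) (x k)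
      / (Gpm (1 - x i) (x k) * Gpm (-(1 - x i)) (x k))
  set RC := ∏ l ∈ Finset.univ.erase i, ∏ k ∈ Finset.Ioi l,
      (t - x l + x k) * (t - x l - x k) / ((x k + x l) * (x k - x l))
  set RD := ∏ l ∈ Finset.univ.erase i, ∏ k ∈ Finset.Ioi l,
      Gpm (t + x l) (x k) * Gpm (t - x l) (x k) / (Gpm (x l) (x k) * Gpm (-(x l)) (x k))
  set RS := ∏ l ∈ Finset.univ.erase i, Gpm a (x l) * Gpm b (x l) * Gpm c (x l) * Gpm d (x l) /
      (Complex.Gamma (2 * x l) * Complex.Gamma (-(2 * x l)))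
  set RT := ∏ l ∈ Finset.univ.erase i, (a - x l) * (b - x l) / (-2 * x l)
  set sc := (a - x i) * (b - x i) / (-2 * x i)
  set sc' := (a - (1 - x i)) * (b - (1 - x i)) / (-2 * (1 - x i))
  set sd := Gpm a (x i) * Gpm b (x i) * Gpm c (x i) * Gpm d (x i) /
      (Complex.Gamma (2 * x i) * Complex.Gamma (-(2 * x i)))
  set sd' := Gpm a (1 - x i) * Gpm b (1 - x i) * Gpm c (1 - x i) * Gpm d (1 - x i) /
      (Complex.Gamma (2 * (1 - x i)) * Complex.Gamma (-(2 * (1 - x i))))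
  set c0 := (c - x i) * (d - x i) / (1 - 2 * x i)
  set c0' := (c - (1 - x i)) * (d - (1 - x i)) / (1 - 2 * (1 - x i))
  linear_combination (-(PC * PD * RC * RD * RS * RT)) * hsingle
    + (-(c0' * sc' * sd' * RC * RD * RS * RT)) * hpairs


/-- For each i ∈ [0,n] the function c_i(x)Δ(x) is invariant under the simple reflection s_i
(at generic points): the middle reflections s_i swap x_i, x_{i+1}; sₙ negates xₙ; the affine
reflection s₀ replaces x₁ by 1 − x₁.  Here (a,b,c,d) = (tₙ+uₙ, tₙ−uₙ, t₀+u₀+1/2, t₀−u₀+1/2),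
c₀(x) = (c−x₁)(d−x₁)/(1−2x₁), c_i(x) = (t+x_i−x_{i+1})/(x_i−x_{i+1}),
cₙ(x) = (a+xₙ)(b+xₙ)/(2xₙ). -/
theorem stmt16 (n : ℕ) (hn : 0 < n) (t0 u0 tn un t a b c d : ℂ)
    (ha : a = tn + un) (hb : b = tn - un) (hc : c = t0 + u0 + 1 / 2) (hd : d = t0 - u0 + 1 / 2) :
    -- middle reflections s_i, 1 ≤ i ≤ n-1
    (∀ i j : Fin n, (i : ℕ) + 1 = (j : ℕ) → ∀ x : Fin n → ℂ,
      (∀ l, x l ≠ 0) → (∀ l m : Fin n, l ≠ m → (x l) ^ 2 ≠ (x m) ^ 2) →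
      ((t + x i - x j) / (x i - x j)) * Dfull n a b c d t x
        = ((t + (x ∘ Equiv.swap i j) i - (x ∘ Equiv.swap i j) j)
            / ((x ∘ Equiv.swap i j) i - (x ∘ Equiv.swap i j) j))
            * Dfull n a b c d t (x ∘ Equiv.swap i j)) ∧
    -- the reflection sₙ negating xₙ
    (∀ x : Fin n → ℂ,
      (∀ l, x l ≠ 0) → (∀ l m : Fin n, l ≠ m → (x l) ^ 2 ≠ (x m) ^ 2) →
      ((a + x ⟨n - 1, by omega⟩) * (b + x ⟨n - 1, by omega⟩) / (2 * x ⟨n - 1, by omega⟩))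
          * Dfull n a b c d t x
        = ((a - x ⟨n - 1, by omega⟩) * (b - x ⟨n - 1, by omega⟩) / (-2 * x ⟨n - 1, by omega⟩))
            * Dfull n a b c d t
                (Function.update x ⟨n - 1, by omega⟩ (-(x ⟨n - 1, by omega⟩)))) ∧
    -- the affine reflection s₀ : x₁ ↦ 1 − x₁
    (∀ x : Fin n → ℂ,
      (∀ l, x l ≠ 0) → (∀ l m : Fin n, l ≠ m → (x l) ^ 2 ≠ (x m) ^ 2) →
      (∀ m : ℤ, 2 * x ⟨0, hn⟩ ≠ (m : ℂ)) →
      (∀ k : Fin n, k ≠ ⟨0, hn⟩ → ∀ m : ℤ,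
        x ⟨0, hn⟩ + x k ≠ (m : ℂ) ∧ x ⟨0, hn⟩ - x k ≠ (m : ℂ) ∧
        t + x ⟨0, hn⟩ + x k ≠ (m : ℂ) ∧ t + x ⟨0, hn⟩ - x k ≠ (m : ℂ) ∧
        t - x ⟨0, hn⟩ + x k ≠ (m : ℂ) ∧ t - x ⟨0, hn⟩ - x k ≠ (m : ℂ)) →
      (∀ m : ℤ, a + x ⟨0, hn⟩ ≠ (m : ℂ) ∧ a - x ⟨0, hn⟩ ≠ (m : ℂ) ∧
        b + x ⟨0, hn⟩ ≠ (m : ℂ) ∧ b - x ⟨0, hn⟩ ≠ (m : ℂ) ∧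
        c + x ⟨0, hn⟩ ≠ (m : ℂ) ∧ c - x ⟨0, hn⟩ ≠ (m : ℂ) ∧
        d + x ⟨0, hn⟩ ≠ (m : ℂ) ∧ d - x ⟨0, hn⟩ ≠ (m : ℂ)) →
      ((c - x ⟨0, hn⟩) * (d - x ⟨0, hn⟩) / (1 - 2 * x ⟨0, hn⟩)) * Dfull n a b c d t x
        = ((c - (1 - x ⟨0, hn⟩)) * (d - (1 - x ⟨0, hn⟩)) / (1 - 2 * (1 - x ⟨0, hn⟩)))
            * Dfull n a b c d t (Function.update x ⟨0, hn⟩ (1 - x ⟨0, hn⟩))) := by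
  refine ⟨?_, ?_, ?_⟩
  · intro i j hij x hx0 hsq
    exact part1 a b c d t i j hij x (hsq i j (Fin.ne_of_val_ne (by omega)))
  · intro x hx0 hsq
    refine part2 a b c d t ⟨n - 1, by omega⟩ ?_ x
    ext k
    simp only [Finset.mem_Ioi, Finset.notMem_empty, iff_false, not_lt, Fin.le_def]
    have := k.isLt
    omega
  · intro x hx0 hsq h2x hpr hab
    refine part3 a b c d t ⟨0, hn⟩ ?_ x h2x hpr hab
    intro l hl
    have hne : (l : ℕ) ≠ 0 := fun h => hl (Fin.ext h)
    exact Fin.lt_def.2 (by simpa using Nat.pos_of_ne_zero hne)
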